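/- Let κ : ℝ → ℝⁿ be a polynomial map of degree d ≥ 1, say κ(t) = a_d t^d + ··· + a_1 t + a_0 with a_d ≠ 0. Then the cosine of the angle between κ(t) and κ'(t), namely (κ(t)·κ'(t))/(|κ(t)||κ'(t)|), tends to 1 as t → +∞ and to -1 as t → -∞. -/

import Mathlib

open Filter RealInnerProductSpace

private lemma key_6 (n d : ℕ) (hd : 1 ≤ d)
    (a : ℕ → EuclideanSpace ℝ (Fin n)) (had : a d ≠ 0)
    (κ : ℝ → EuclideanSpace ℝ (Fin n))
    (hκ : ∀ t, κ t = ∑ i ∈ Finset.range (d + 1), t ^ i • a i)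
    (l : Filter ℝ) (habs : Tendsto (fun t : ℝ => |t|) l atTop)
    (ε : ℝ) (hε : ε = 1 ∨ ε = -1) (hsgn : ∀ᶠ t in l, 0 < ε * t) :
    Tendsto (fun t => ⟪κ t, deriv κ t⟫ / (‖κ t‖ * ‖deriv κ t‖)) l (nhds ε) := by
  have hd0 : (d : ℝ) ≠ 0 := Nat.cast_ne_zero.mpr (by omega)
  -- eventually t ≠ 0
  have hne0 : ∀ᶠ t : ℝ in l, t ≠ 0 := by
    filter_upwards [habs.eventually_ge_atTop 1] with t ht
    intro h; rw [h] at ht; simp at ht; linarith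
  -- helper: (t^k)⁻¹ → 0
  have hzero : ∀ k : ℕ, 1 ≤ k → Tendsto (fun t : ℝ => (t ^ k)⁻¹) l (nhds 0) := by
    intro k hk
    have h1 : Tendsto (fun t : ℝ => |t| ^ k) l atTop :=
      (tendsto_pow_atTop (by omega)).comp habs
    have h2 : Tendsto (fun t : ℝ => (|t| ^ k)⁻¹) l (nhds 0) := h1.inv_tendsto_atTop
    rw [tendsto_zero_iff_norm_tendsto_zero]
    simpa [Real.norm_eq_abs, abs_inv, abs_pow] using h2
  -- deriv formula
  have hder : ∀ t : ℝ, deriv κ t = ∑ i ∈ Finset.range (d + 1), ((i : ℝ) * t ^ (i - 1)) • a i := by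
    intro t
    have hκ' : κ = fun t => ∑ i ∈ Finset.range (d + 1), t ^ i • a i := funext hκ
    have h : HasDerivAt κ (∑ i ∈ Finset.range (d + 1), ((i : ℝ) * t ^ (i - 1)) • a i) t := by
      rw [hκ']
      exact HasDerivAt.fun_sum fun i _ => (hasDerivAt_pow i t).smul_const (a i)
    exact h.deriv
  set u : ℝ → EuclideanSpace ℝ (Fin n) := fun t => (t ^ d)⁻¹ • κ t with hu_def
  set v : ℝ → EuclideanSpace ℝ (Fin n) := fun t => (((d : ℝ) * t ^ (d - 1))⁻¹) • deriv κ t with hv_def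
  -- limit of u
  have hu : Tendsto u l (nhds (a d)) := by
    have h1 : ∀ t : ℝ, t ≠ 0 →
        u t = ∑ i ∈ Finset.range (d + 1), (t ^ (d - i))⁻¹ • a i := by
      intro t ht
      rw [hu_def]
      simp only
      rw [hκ, Finset.smul_sum]
      refine Finset.sum_congr rfl fun i hi => ?_
      have hid : i ≤ d := Nat.lt_succ_iff.mp (Finset.mem_range.mp hi)
      rw [smul_smul]
      congr 1
      have hp : t ^ d = t ^ (d - i) * t ^ i := by rw [← pow_add]; congr 1; omega
      rw [hp, mul_inv, mul_assoc, inv_mul_cancel₀ (pow_ne_zero _ ht), mul_one]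
    have h2 : Tendsto (fun t : ℝ => ∑ i ∈ Finset.range (d + 1), (t ^ (d - i))⁻¹ • a i) l
        (nhds (∑ i ∈ Finset.range (d + 1), if i = d then a i else 0)) := by
      refine tendsto_finset_sum _ fun i hi => ?_
      have hid : i ≤ d := Nat.lt_succ_iff.mp (Finset.mem_range.mp hi)
      rcases eq_or_lt_of_le hid with h | h
      · subst h
        simp only [Nat.sub_self, pow_zero, inv_one, one_smul, if_pos rfl]
        exact tendsto_const_nhds
      · rw [if_neg (by omega)]
        have := (hzero (d - i) (by omega)).smul_const (a i)
        simpa using this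
    rw [Finset.sum_ite_eq' (Finset.range (d + 1)) d a,
      if_pos (Finset.mem_range.mpr (by omega))] at h2
    exact h2.congr' (by filter_upwards [hne0] with t ht using (h1 t ht).symm)
  -- limit of v
  have hv : Tendsto v l (nhds (a d)) := by
    have h1 : ∀ t : ℝ, t ≠ 0 →
        v t = ∑ i ∈ Finset.range (d + 1), (((i : ℝ) / d) * (t ^ (d - i))⁻¹) • a i := by
      intro t ht
      rw [hv_def]
      simp only
      rw [hder, Finset.smul_sum]
      refine Finset.sum_congr rfl fun i hi => ?_
      have hid : i ≤ d := Nat.lt_succ_iff.mp (Finset.mem_range.mp hi)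
      rw [smul_smul]
      congr 1
      rcases Nat.eq_zero_or_pos i with h0 | h0
      · subst h0; simp
      · have hp : t ^ (d - 1) = t ^ (d - i) * t ^ (i - 1) := by rw [← pow_add]; congr 1; omega
        rw [hp]
        field_simp
    have h2 : Tendsto (fun t : ℝ => ∑ i ∈ Finset.range (d + 1),
        (((i : ℝ) / d) * (t ^ (d - i))⁻¹) • a i) l
        (nhds (∑ i ∈ Finset.range (d + 1), if i = d then a i else 0)) := by
      refine tendsto_finset_sum _ fun i hi => ?_
      have hid : i ≤ d := Nat.lt_succ_iff.mp (Finset.mem_range.mp hi)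
      rcases eq_or_lt_of_le hid with h | h
      · subst h
        simp only [Nat.sub_self, pow_zero, inv_one, mul_one, div_self hd0, one_smul, if_pos rfl]
        exact tendsto_const_nhds
      · rw [if_neg (by omega)]
        have := (((hzero (d - i) (by omega)).const_mul ((i : ℝ) / d)).smul_const (a i))
        simpa using this
    rw [Finset.sum_ite_eq' (Finset.range (d + 1)) d a,
      if_pos (Finset.mem_range.mpr (by omega))] at h2
    exact h2.congr' (by filter_upwards [hne0] with t ht using (h1 t ht).symm)
  -- limits of numerator and denominator pieces
  have hX : Tendsto (fun t => ⟪u t, v t⟫) l (nhds (‖a d‖ ^ 2)) := by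
    have h := Tendsto.inner (𝕜 := ℝ) hu hv
    rwa [real_inner_self_eq_norm_sq] at h
  have hY : Tendsto (fun t => ‖u t‖ * ‖v t‖) l (nhds (‖a d‖ * ‖a d‖)) :=
    hu.norm.mul hv.norm
  have hYne : ‖a d‖ * ‖a d‖ ≠ 0 :=
    mul_ne_zero (norm_ne_zero_iff.mpr had) (norm_ne_zero_iff.mpr had)
  have hXY : Tendsto (fun t => ⟪u t, v t⟫ / (‖u t‖ * ‖v t‖)) l (nhds 1) := by
    have := hX.div hY hYne
    have h1 : ‖a d‖ ^ 2 / (‖a d‖ * ‖a d‖) = 1 := by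
      rw [sq]; exact div_self hYne
    rwa [h1] at this
  have hfinal := hXY.const_mul ε
  rw [mul_one] at hfinal
  refine hfinal.congr' ?_
  filter_upwards [hsgn] with t ht
  have ht0 : t ≠ 0 := by
    intro h; rw [h, mul_zero] at ht; exact lt_irrefl 0 ht
  have htd : t ^ d ≠ 0 := pow_ne_zero _ ht0
  have htc : (d : ℝ) * t ^ (d - 1) ≠ 0 := mul_ne_zero hd0 (pow_ne_zero _ ht0)
  have hκt : κ t = t ^ d • u t := (smul_inv_smul₀ htd (κ t)).symm
  have hdt : deriv κ t = ((d : ℝ) * t ^ (d - 1)) • v t := (smul_inv_smul₀ htc (deriv κ t)).symm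
  have hteps : t = ε * |t| := by
    rcases hε with rfl | rfl
    · rw [one_mul] at ht ⊢; rw [abs_of_pos ht]
    · have ht' : t < 0 := by nlinarith
      rw [abs_of_neg ht']; ring
  -- sign identity
  have hsignid : |t ^ d| * |(d : ℝ) * t ^ (d - 1)| =
      ε * (t ^ d * ((d : ℝ) * t ^ (d - 1))) := by
    have hodd : Odd (d + (d - 1)) := ⟨d - 1, by omega⟩
    have hpow : t ^ d * t ^ (d - 1) = t ^ (d + (d - 1)) := (pow_add t d (d - 1)).symm
    have habs' : |t ^ d| * |t ^ (d - 1)| = |t| ^ (d + (d - 1)) := by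
      rw [abs_pow, abs_pow, ← pow_add]
    have hkey : ε * t ^ (d + (d - 1)) = |t| ^ (d + (d - 1)) := by
      rcases hε with rfl | rfl
      · rw [one_mul] at ht
        rw [one_mul, abs_of_pos ht]
      · have ht' : t < 0 := by nlinarith
        have : t ^ (d + (d - 1)) < 0 := hodd.pow_neg ht'
        rw [abs_of_neg ht', hodd.neg_pow]
        ring
    rw [abs_mul, Nat.abs_cast]
    calc |t ^ d| * ((d : ℝ) * |t ^ (d - 1)|)
        = (d : ℝ) * (|t ^ d| * |t ^ (d - 1)|) := by ring
      _ = (d : ℝ) * (ε * t ^ (d + (d - 1))) := by rw [habs', ← hkey]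
      _ = ε * (t ^ d * ((d : ℝ) * t ^ (d - 1))) := by rw [← hpow]; ring
  -- compute the expression
  set c : ℝ := t ^ d * ((d : ℝ) * t ^ (d - 1)) with hc_def
  have hc0 : c ≠ 0 := mul_ne_zero htd htc
  have hnum : ⟪κ t, deriv κ t⟫ = c * ⟪u t, v t⟫ := by
    rw [hκt, hdt, real_inner_smul_left, real_inner_smul_right, hc_def]; ring
  have hden : ‖κ t‖ * ‖deriv κ t‖ = (ε * c) * (‖u t‖ * ‖v t‖) := by
    calc ‖κ t‖ * ‖deriv κ t‖
        = (|t ^ d| * |(d : ℝ) * t ^ (d - 1)|) * (‖u t‖ * ‖v t‖) := by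
          rw [hκt, hdt, norm_smul (t ^ d) (u t),
            norm_smul ((d : ℝ) * t ^ (d - 1)) (v t), Real.norm_eq_abs, Real.norm_eq_abs]
          ring
      _ = (ε * c) * (‖u t‖ * ‖v t‖) := by rw [hsignid]
  rw [hnum, hden]
  have hgen : ∀ X Y : ℝ, (c * X) / ((ε * c) * Y) = ε * (X / Y) := by
    intro X Y
    rcases eq_or_ne Y 0 with rfl | hY
    · rcases hε with rfl | rfl <;> simp
    · rcases hε with rfl | rfl <;> (field_simp)
  exact (hgen _ _).symm

theorem stmt_6 (n d : ℕ) (hd : 1 ≤ d)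
    (a : ℕ → EuclideanSpace ℝ (Fin n)) (had : a d ≠ 0)
    (κ : ℝ → EuclideanSpace ℝ (Fin n))
    (hκ : ∀ t, κ t = ∑ i ∈ Finset.range (d + 1), t ^ i • a i) :
    Tendsto (fun t => ⟪κ t, deriv κ t⟫ / (‖κ t‖ * ‖deriv κ t‖)) atTop (nhds 1) ∧
    Tendsto (fun t => ⟪κ t, deriv κ t⟫ / (‖κ t‖ * ‖deriv κ t‖)) atBot (nhds (-1)) := by
  constructor
  · refine key_6 n d hd a had κ hκ atTop tendsto_abs_atTop_atTop 1 (Or.inl rfl) ?_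
    filter_upwards [eventually_gt_atTop (0 : ℝ)] with t ht
    rw [one_mul]; exact ht
  · refine key_6 n d hd a had κ hκ atBot tendsto_abs_atBot_atTop (-1) (Or.inr rfl) ?_
    filter_upwards [eventually_lt_atBot (0 : ℝ)] with t ht
    nlinarith
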